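/- (Lyapunov norms for nonuniform polynomial dichotomy) An evolution family T(t,τ) admits a nonuniform polynomial dichotomy (i.e. ∥T(t,τ)P(τ)∥ ≤ D(t/τ)^{-λ}τ^ε for t ≥ τ and ∥T(t,τ)Q(τ)∥ ≤ D(τ/t)^{-λ}τ^ε for t ≤ τ) if and only if it admits a polynomial dichotomy with respect to some family of norms ∥·∥_t satisfying ∥x∥ ≤ ∥x∥_t ≤ Ct^ε∥x∥ for some C > 0 and ε ≥ 0. In the forward direction one may take ∥x∥_τ = sup_{t≥τ}(∥T(t,τ)P(τ)x∥(t/τ)^λ) + sup_{t≤τ}(∥T(t,τ)Q(τ)x∥(τ/t)^λ) and C = 2D. -/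

import Mathlib

open Set

variable {X : Type*} [NormedAddCommGroup X] [NormedSpace ℝ X] [CompleteSpace X]

/-- Evolution family on `[1,∞)`. -/
def IsEvolutionFamily (T : ℝ → ℝ → X →L[ℝ] X) : Prop :=
  (∀ t : ℝ, 1 ≤ t → T t t = ContinuousLinearMap.id ℝ X) ∧
  (∀ τ s t : ℝ, 1 ≤ τ → τ ≤ s → s ≤ t → (T t s).comp (T s τ) = T t τ) ∧
  ∀ τ : ℝ, 1 ≤ τ → ∀ x : X, ContinuousOn (fun s => T s τ x) (Ici τ)

/-- A family of norms `N t` equivalent to `∥·∥` with constants `C, ε`: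
`∥x∥ ≤ ∥x∥_t ≤ C t^ε ∥x∥`. -/
def IsNormFamily (N : ℝ → X → ℝ) (C ε : ℝ) : Prop :=
  (∀ t : ℝ, ∀ x y : X, N t (x + y) ≤ N t x + N t y) ∧
  (∀ t : ℝ, ∀ a : ℝ, ∀ x : X, N t (a • x) = |a| * N t x) ∧
  ∀ t : ℝ, ∀ x : X, 1 ≤ t → ‖x‖ ≤ N t x ∧ N t x ≤ C * t ^ ε * ‖x‖

/-- Polynomial dichotomy with respect to a family of norms `N t`: projections `P`
commuting with the dynamics, invertible on the kernels, contraction rate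
`D(t/τ)^{-λ}` on `Im P(τ)` and expansion rate `D⁻¹(t/τ)^{λ}` on `Ker P(τ)`
(the latter being the forward reformulation of
`∥T(t,τ)Q(τ)x∥_t ≤ D(τ/t)^{-λ}∥x∥_τ` for `t ≤ τ`). -/
def PolyDichotomyWrt (T : ℝ → ℝ → X →L[ℝ] X) (N : ℝ → X → ℝ) : Prop :=
  ∃ P : ℝ → X →L[ℝ] X, ∃ D lam : ℝ, 0 < D ∧ 0 < lam ∧
    (∀ t : ℝ, 1 ≤ t → (P t).comp (P t) = P t) ∧
    (∀ τ t : ℝ, 1 ≤ τ → τ ≤ t → (P t).comp (T t τ) = (T t τ).comp (P τ)) ∧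
    (∀ τ t : ℝ, 1 ≤ τ → τ ≤ t →
      Set.BijOn (⇑(T t τ)) {v : X | P τ v = 0} {v : X | P t v = 0}) ∧
    (∀ τ t : ℝ, 1 ≤ τ → τ ≤ t → ∀ x : X,
      N t (T t τ (P τ x)) ≤ D * (t / τ) ^ (-lam) * N τ x) ∧
    (∀ τ t : ℝ, 1 ≤ τ → τ ≤ t → ∀ v : X, P τ v = 0 →
      D⁻¹ * (t / τ) ^ lam * N τ v ≤ N t (T t τ v))

/-- Nonuniform polynomial dichotomy: `∥T(t,τ)P(τ)∥ ≤ D(t/τ)^{-λ}τ^ε` for `t ≥ τ` and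
`∥T(t,τ)Q(τ)∥ ≤ D(τ/t)^{-λ}τ^ε` for `t ≤ τ` (here stated in the equivalent forward
form `∥T(t,τ)v∥ ≥ D⁻¹(t/τ)^{λ}t^{-ε}∥v∥` for `v ∈ Ker P(τ)`, `t ≥ τ`). -/
def NonuniformPolyDichotomy (T : ℝ → ℝ → X →L[ℝ] X) : Prop :=
  ∃ P : ℝ → X →L[ℝ] X, ∃ D lam ε : ℝ, 0 < D ∧ 0 < lam ∧ 0 ≤ ε ∧
    (∀ t : ℝ, 1 ≤ t → (P t).comp (P t) = P t) ∧
    (∀ τ t : ℝ, 1 ≤ τ → τ ≤ t → (P t).comp (T t τ) = (T t τ).comp (P τ)) ∧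
    (∀ τ t : ℝ, 1 ≤ τ → τ ≤ t →
      Set.BijOn (⇑(T t τ)) {v : X | P τ v = 0} {v : X | P t v = 0}) ∧
    (∀ τ t : ℝ, 1 ≤ τ → τ ≤ t → ∀ x : X,
      ‖T t τ (P τ x)‖ ≤ D * (t / τ) ^ (-lam) * τ ^ ε * ‖x‖) ∧
    (∀ τ t : ℝ, 1 ≤ τ → τ ≤ t → ∀ v : X, P τ v = 0 →
      D⁻¹ * (t / τ) ^ lam * t ^ (-ε) * ‖v‖ ≤ ‖T t τ v‖)

/- Auxiliary lemmas about suprema. -/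
lemma mul_sSup_le_sSup' {c : ℝ} (hc : 0 ≤ c) {S S' : Set ℝ} (hne : S.Nonempty)
    (hbd' : BddAbove S') (h : ∀ r ∈ S, c * r ∈ S') : c * sSup S ≤ sSup S' := by
  rcases hc.eq_or_lt with rfl | hc
  · obtain ⟨u, hu⟩ := hne
    have := le_csSup hbd' (h u hu)
    simpa using this.trans_eq' (by ring)
  · have h1 : sSup S ≤ c⁻¹ * sSup S' := csSup_le hne fun u hu => by
      rw [le_inv_mul_iff₀ hc]; exact le_csSup hbd' (h u hu)
    calc c * sSup S ≤ c * (c⁻¹ * sSup S') := mul_le_mul_of_nonneg_left h1 hc.le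
      _ = sSup S' := by field_simp

lemma sSup_scale' {c : ℝ} (hc : 0 ≤ c) {S S' : Set ℝ} (hne : S.Nonempty) (hbd : BddAbove S)
    (hne' : S'.Nonempty) (hbd' : BddAbove S')
    (h1 : ∀ r ∈ S, c * r ∈ S') (h2 : ∀ r ∈ S', ∃ u ∈ S, r = c * u) :
    sSup S' = c * sSup S := by
  apply le_antisymm
  · refine csSup_le hne' fun r hr => ?_
    obtain ⟨u, hu, rfl⟩ := h2 r hr
    exact mul_le_mul_of_nonneg_left (le_csSup hbd hu) hc
  · exact mul_sSup_le_sSup' hc hne hbd' h1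

/-- The "stable part" set of values defining the Lyapunov norm. -/
def S1set (T : ℝ → ℝ → X →L[ℝ] X) (P : ℝ → X →L[ℝ] X) (lam τ : ℝ) (x : X) : Set ℝ :=
  {r | ∃ t, τ ≤ t ∧ r = ‖T t τ (P τ x)‖ * (t / τ) ^ lam}

/-- The "unstable part" set of values defining the Lyapunov norm (via preimages). -/
def S2set (T : ℝ → ℝ → X →L[ℝ] X) (P : ℝ → X →L[ℝ] X) (lam τ : ℝ) (x : X) : Set ℝ :=
  {r | ∃ s, 1 ≤ s ∧ s ≤ τ ∧ ∃ w, P s w = 0 ∧ T τ s w = x - P τ x ∧ r = ‖w‖ * (τ / s) ^ lam}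

/-- The Lyapunov norm. -/
noncomputable def Nlyap (T : ℝ → ℝ → X →L[ℝ] X) (P : ℝ → X →L[ℝ] X) (lam τ : ℝ)
    (x : X) : ℝ :=
  if 1 ≤ τ then sSup (S1set T P lam τ x) + sSup (S2set T P lam τ x) else ‖x‖

/-- Proposition 1: an evolution family admits a nonuniform polynomial dichotomy iff
it admits a polynomial dichotomy with respect to some family of norms satisfying
`∥x∥ ≤ ∥x∥_t ≤ Ct^ε∥x∥`. -/
theorem stmt17 (T : ℝ → ℝ → X →L[ℝ] X) (hT : IsEvolutionFamily T) :
    NonuniformPolyDichotomy T ↔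
      ∃ N : ℝ → X → ℝ, ∃ C ε : ℝ, 0 < C ∧ 0 ≤ ε ∧
        IsNormFamily N C ε ∧ PolyDichotomyWrt T N := by
  obtain ⟨hTid, hTcomp, -⟩ := hT
  constructor
  · rintro ⟨P, D, lam, ε, hD, hlam, hε, hPP, hcomm, hbij, hstab, hunst⟩
    -- pointwise versions of the algebraic hypotheses
    have hTid' : ∀ t : ℝ, 1 ≤ t → ∀ x : X, T t t x = x := by
      intro t ht x; rw [hTid t ht]; rfl
    have hTco : ∀ τ s t : ℝ, 1 ≤ τ → τ ≤ s → s ≤ t → ∀ x : X,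
        T t s (T s τ x) = T t τ x := by
      intro τ s t h1 h2 h3 x
      have := DFunLike.congr_fun (hTcomp τ s t h1 h2 h3) x
      simpa using this
    have hPid : ∀ t : ℝ, 1 ≤ t → ∀ x : X, P t (P t x) = P t x := by
      intro t ht x
      have := DFunLike.congr_fun (hPP t ht) x
      simpa using this
    have hcomm' : ∀ τ t : ℝ, 1 ≤ τ → τ ≤ t → ∀ x : X,
        P t (T t τ x) = T t τ (P τ x) := by
      intro τ t h1 h2 x
      have := DFunLike.congr_fun (hcomm τ t h1 h2) x
      simpa using this
    have hQker : ∀ τ : ℝ, 1 ≤ τ → ∀ x : X, P τ (x - P τ x) = 0 := by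
      intro τ hτ x
      rw [map_sub, hPid τ hτ, sub_self]
    -- abbreviations
    set A := S1set T P lam with hA
    set B := S2set T P lam with hB
    have hpos : ∀ τ : ℝ, 1 ≤ τ → (0:ℝ) < τ := fun τ hτ => lt_of_lt_of_le one_pos hτ
    -- membership of the basic elements
    have hA_mem : ∀ τ : ℝ, 1 ≤ τ → ∀ x : X, ‖P τ x‖ ∈ A τ x := by
      intro τ hτ x
      refine ⟨τ, le_refl τ, ?_⟩
      rw [hTid' τ hτ, div_self (hpos τ hτ).ne', Real.one_rpow, mul_one]
    have hB_mem : ∀ τ : ℝ, 1 ≤ τ → ∀ x : X, ‖x - P τ x‖ ∈ B τ x := by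
      intro τ hτ x
      refine ⟨τ, hτ, le_refl τ, x - P τ x, hQker τ hτ x, hTid' τ hτ _, ?_⟩
      rw [div_self (hpos τ hτ).ne', Real.one_rpow, mul_one]
    -- upper bounds on the elements
    have hrpow_cancel : ∀ a b : ℝ, 0 < a → a ^ (-b) * a ^ b = 1 := by
      intro a b ha
      rw [← Real.rpow_add ha, neg_add_cancel, Real.rpow_zero]
    have hA_elem : ∀ τ : ℝ, 1 ≤ τ → ∀ x : X, ∀ r ∈ A τ x, r ≤ D * τ ^ ε * ‖x‖ := by
      intro τ hτ x r hr
      obtain ⟨t, ht, rfl⟩ := hr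
      have hdiv : (0:ℝ) < t / τ := div_pos (lt_of_lt_of_le (hpos τ hτ) ht) (hpos τ hτ)
      have h1 := hstab τ t hτ ht x
      calc ‖T t τ (P τ x)‖ * (t / τ) ^ lam
          ≤ (D * (t / τ) ^ (-lam) * τ ^ ε * ‖x‖) * (t / τ) ^ lam :=
            mul_le_mul_of_nonneg_right h1 (Real.rpow_pos_of_pos hdiv _).le
        _ = (D * τ ^ ε * ‖x‖) * ((t / τ) ^ (-lam) * (t / τ) ^ lam) := by ring
        _ = D * τ ^ ε * ‖x‖ := by rw [hrpow_cancel _ _ hdiv, mul_one]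
    have hB_elem : ∀ τ : ℝ, 1 ≤ τ → ∀ x : X, ∀ r ∈ B τ x,
        r ≤ D * τ ^ ε * ‖x - P τ x‖ := by
      intro τ hτ x r hr
      obtain ⟨s, hs1, hs2, w, hw, hTw, rfl⟩ := hr
      have h1 := hunst s τ hs1 hs2 w hw
      rw [hTw] at h1
      have hτ0 : (0:ℝ) < τ := hpos τ hτ
      have hkey : D * τ ^ ε * (D⁻¹ * (τ / s) ^ lam * τ ^ (-ε) * ‖w‖)
          = ‖w‖ * (τ / s) ^ lam := by
        rw [Real.rpow_neg hτ0.le]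
        have hDne : D ≠ 0 := hD.ne'
        have hτe : (τ:ℝ) ^ ε ≠ 0 := (Real.rpow_pos_of_pos hτ0 ε).ne'
        field_simp
      calc ‖w‖ * (τ / s) ^ lam
          = D * τ ^ ε * (D⁻¹ * (τ / s) ^ lam * τ ^ (-ε) * ‖w‖) := hkey.symm
        _ ≤ D * τ ^ ε * ‖x - P τ x‖ := by
            apply mul_le_mul_of_nonneg_left h1
            positivity
    -- nonemptiness and boundedness
    have hAne : ∀ τ : ℝ, 1 ≤ τ → ∀ x : X, (A τ x).Nonempty :=
      fun τ hτ x => ⟨_, hA_mem τ hτ x⟩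
    have hBne : ∀ τ : ℝ, 1 ≤ τ → ∀ x : X, (B τ x).Nonempty :=
      fun τ hτ x => ⟨_, hB_mem τ hτ x⟩
    have hAbdd : ∀ τ : ℝ, 1 ≤ τ → ∀ x : X, BddAbove (A τ x) :=
      fun τ hτ x => ⟨D * τ ^ ε * ‖x‖, fun r hr => hA_elem τ hτ x r hr⟩
    have hBbdd : ∀ τ : ℝ, 1 ≤ τ → ∀ x : X, BddAbove (B τ x) :=
      fun τ hτ x => ⟨D * τ ^ ε * ‖x - P τ x‖, fun r hr => hB_elem τ hτ x r hr⟩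
    have hAnn : ∀ τ : ℝ, 1 ≤ τ → ∀ x : X, 0 ≤ sSup (A τ x) :=
      fun τ hτ x => (norm_nonneg _).trans (le_csSup (hAbdd τ hτ x) (hA_mem τ hτ x))
    have hBnn : ∀ τ : ℝ, 1 ≤ τ → ∀ x : X, 0 ≤ sSup (B τ x) :=
      fun τ hτ x => (norm_nonneg _).trans (le_csSup (hBbdd τ hτ x) (hB_mem τ hτ x))
    -- bound on ‖P τ‖
    have hPbd : ∀ τ : ℝ, 1 ≤ τ → ∀ x : X, ‖P τ x‖ ≤ D * τ ^ ε * ‖x‖ := by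
      intro τ hτ x
      exact hA_elem τ hτ x _ (hA_mem τ hτ x)
    refine ⟨Nlyap T P lam, 2 * D + D ^ 2, 2 * ε, by positivity, by positivity, ?_, ?_⟩
    · -- norm family
      refine ⟨?_, ?_, ?_⟩
      · -- triangle inequality
        intro t x y
        by_cases ht : 1 ≤ t
        · simp only [Nlyap, if_pos ht]
          rw [← hA, ← hB]
          have e1 : sSup (A t (x + y)) ≤ sSup (A t x) + sSup (A t y) := by
            refine csSup_le (hAne t ht _) fun r hr => ?_
            obtain ⟨u, hu, rfl⟩ := hr
            have hc : (0:ℝ) ≤ (u / t) ^ lam :=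
              (Real.rpow_pos_of_pos (div_pos (lt_of_lt_of_le (hpos t ht) hu) (hpos t ht)) _).le
            calc ‖T u t (P t (x + y))‖ * (u / t) ^ lam
                ≤ (‖T u t (P t x)‖ + ‖T u t (P t y)‖) * (u / t) ^ lam := by
                  apply mul_le_mul_of_nonneg_right _ hc
                  rw [map_add, map_add]
                  exact norm_add_le _ _
              _ = ‖T u t (P t x)‖ * (u / t) ^ lam + ‖T u t (P t y)‖ * (u / t) ^ lam := by
                  ring
              _ ≤ sSup (A t x) + sSup (A t y) :=
                  add_le_add (le_csSup (hAbdd t ht x) ⟨u, hu, rfl⟩)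
                    (le_csSup (hAbdd t ht y) ⟨u, hu, rfl⟩)
          have e2 : sSup (B t (x + y)) ≤ sSup (B t x) + sSup (B t y) := by
            refine csSup_le (hBne t ht _) fun r hr => ?_
            obtain ⟨s, hs1, hs2, w, hw, hTw, rfl⟩ := hr
            obtain ⟨wx, hwx, hTwx⟩ := (hbij s t hs1 hs2).surjOn (hQker t ht x)
            have hwx' : P s wx = 0 := hwx
            have hwy : P s (w - wx) = 0 := by rw [map_sub, hw, hwx', sub_zero]
            have hTwy : T t s (w - wx) = y - P t y := by
              rw [map_sub, hTw, hTwx, map_add]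
              abel
            have hc : (0:ℝ) ≤ (t / s) ^ lam :=
              (Real.rpow_pos_of_pos (div_pos (lt_of_lt_of_le one_pos (hs1.trans hs2))
                (lt_of_lt_of_le one_pos hs1)) _).le
            calc ‖w‖ * (t / s) ^ lam
                = ‖wx + (w - wx)‖ * (t / s) ^ lam := by rw [add_sub_cancel]
              _ ≤ (‖wx‖ + ‖w - wx‖) * (t / s) ^ lam :=
                  mul_le_mul_of_nonneg_right (norm_add_le _ _) hc
              _ = ‖wx‖ * (t / s) ^ lam + ‖w - wx‖ * (t / s) ^ lam := by ring
              _ ≤ sSup (B t x) + sSup (B t y) :=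
                  add_le_add (le_csSup (hBbdd t ht x) ⟨s, hs1, hs2, wx, hwx', hTwx, rfl⟩)
                    (le_csSup (hBbdd t ht y) ⟨s, hs1, hs2, w - wx, hwy, hTwy, rfl⟩)
          calc sSup (A t (x + y)) + sSup (B t (x + y))
              ≤ (sSup (A t x) + sSup (A t y)) + (sSup (B t x) + sSup (B t y)) :=
                add_le_add e1 e2
            _ = (sSup (A t x) + sSup (B t x)) + (sSup (A t y) + sSup (B t y)) := by ring
        · simp only [Nlyap, if_neg ht]
          exact norm_add_le x y
      · -- homogeneity
        intro t a x
        by_cases ht : 1 ≤ t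
        · simp only [Nlyap, if_pos ht]
          rw [← hA, ← hB]
          have eA : sSup (A t (a • x)) = |a| * sSup (A t x) := by
            refine sSup_scale' (abs_nonneg a) (hAne t ht x) (hAbdd t ht x)
              (hAne t ht _) (hAbdd t ht _) ?_ ?_
            · rintro r ⟨u, hu, rfl⟩
              refine ⟨u, hu, ?_⟩
              rw [map_smul, map_smul, norm_smul, Real.norm_eq_abs]
              ring
            · rintro r ⟨u, hu, rfl⟩
              refine ⟨‖T u t (P t x)‖ * (u / t) ^ lam, ⟨u, hu, rfl⟩, ?_⟩
              rw [map_smul, map_smul, norm_smul, Real.norm_eq_abs]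
              ring
          have eB : sSup (B t (a • x)) = |a| * sSup (B t x) := by
            refine sSup_scale' (abs_nonneg a) (hBne t ht x) (hBbdd t ht x)
              (hBne t ht _) (hBbdd t ht _) ?_ ?_
            · rintro r ⟨s, hs1, hs2, w, hw, hTw, rfl⟩
              refine ⟨s, hs1, hs2, a • w, by rw [map_smul, hw, smul_zero], ?_, ?_⟩
              · rw [map_smul, hTw, map_smul, smul_sub]
              · rw [norm_smul, Real.norm_eq_abs]; ring
            · rintro r ⟨s, hs1, hs2, w, hw, hTw, rfl⟩
              by_cases ha : a = 0
              · subst ha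
                have hw0 : w = 0 := by
                  apply (hbij s t hs1 hs2).injOn hw (by simp)
                  rw [hTw, map_zero]
                  simp
                refine ⟨‖x - P t x‖, hB_mem t ht x, ?_⟩
                rw [hw0]
                simp
              · refine ⟨‖a⁻¹ • w‖ * (t / s) ^ lam,
                  ⟨s, hs1, hs2, a⁻¹ • w, by rw [map_smul, hw, smul_zero], ?_, rfl⟩, ?_⟩
                · rw [map_smul, hTw, map_smul, smul_sub, smul_smul, smul_smul,
                    inv_mul_cancel₀ ha, one_smul, one_smul]
                · rw [norm_smul, Real.norm_eq_abs, abs_inv]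
                  field_simp
          rw [eA, eB]
          ring
        · simp only [Nlyap, if_neg ht]
          rw [norm_smul, Real.norm_eq_abs]
      · -- equivalence of norms
        intro t x ht
        simp only [Nlyap, if_pos ht]
        rw [← hA, ← hB]
        have ht0 : (0:ℝ) < t := hpos t ht
        constructor
        · calc ‖x‖ = ‖P t x + (x - P t x)‖ := by rw [add_sub_cancel]
            _ ≤ ‖P t x‖ + ‖x - P t x‖ := norm_add_le _ _
            _ ≤ sSup (A t x) + sSup (B t x) :=
                add_le_add (le_csSup (hAbdd t ht x) (hA_mem t ht x))
                  (le_csSup (hBbdd t ht x) (hB_mem t ht x))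
        · have hone : (1:ℝ) ≤ t ^ ε := Real.one_le_rpow ht hε
          have htwo : t ^ ε ≤ t ^ (2 * ε) :=
            Real.rpow_le_rpow_of_exponent_le ht (by linarith)
          have htε : (0:ℝ) < t ^ ε := Real.rpow_pos_of_pos ht0 _
          have e1 : sSup (A t x) ≤ D * t ^ ε * ‖x‖ :=
            csSup_le (hAne t ht x) (hA_elem t ht x)
          have e2 : sSup (B t x) ≤ D * t ^ ε * ‖x - P t x‖ :=
            csSup_le (hBne t ht x) (hB_elem t ht x)
          have e3 : ‖x - P t x‖ ≤ ‖x‖ + D * t ^ ε * ‖x‖ :=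
            (norm_sub_le _ _).trans (by linarith [hPbd t ht x])
          have e4 : t ^ ε * t ^ ε = t ^ (2 * ε) := by
            rw [← Real.rpow_add ht0]; ring_nf
          have hx : (0:ℝ) ≤ ‖x‖ := norm_nonneg x
          calc sSup (A t x) + sSup (B t x)
              ≤ D * t ^ ε * ‖x‖ + D * t ^ ε * (‖x‖ + D * t ^ ε * ‖x‖) := by
                refine add_le_add e1 (e2.trans ?_)
                apply mul_le_mul_of_nonneg_left e3
                positivity
            _ = 2 * D * t ^ ε * ‖x‖ + D ^ 2 * (t ^ ε * t ^ ε) * ‖x‖ := by ring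
            _ ≤ 2 * D * t ^ (2 * ε) * ‖x‖ + D ^ 2 * t ^ (2 * ε) * ‖x‖ := by
                rw [e4]
                have : 2 * D * t ^ ε ≤ 2 * D * t ^ (2 * ε) :=
                  mul_le_mul_of_nonneg_left htwo (by positivity)
                nlinarith [Real.rpow_pos_of_pos ht0 (2 * ε)]
            _ = (2 * D + D ^ 2) * t ^ (2 * ε) * ‖x‖ := by ring
    · -- polynomial dichotomy w.r.t. the Lyapunov norms
      refine ⟨P, 1, lam, one_pos, hlam, hPP, hcomm, hbij, ?_, ?_⟩
      · -- stable bound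
        intro τ t hτ hle x
        have ht : (1:ℝ) ≤ t := hτ.trans hle
        set x' := T t τ (P τ x) with hx'
        have hPx' : P t x' = x' := by
          rw [hx', hcomm' τ t hτ hle, hPid τ hτ]
        -- the unstable part of N t x' vanishes
        have hB0 : sSup (B t x') = 0 := by
          apply le_antisymm _ (hBnn t ht x')
          refine csSup_le (hBne t ht x') fun r hr => ?_
          obtain ⟨s, hs1, hs2, w, hw, hTw, rfl⟩ := hr
          have hw0 : w = 0 := by
            apply (hbij s t hs1 hs2).injOn hw (by simp)
            rw [hTw, hPx', sub_self, map_zero]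
          rw [hw0]
          simp
        have hA1 : sSup (A t x') ≤ (t / τ) ^ (-lam) * sSup (A τ x) := by
          refine csSup_le (hAne t ht x') fun r hr => ?_
          obtain ⟨u, hu, rfl⟩ := hr
          have hτ0 : (0:ℝ) < τ := hpos τ hτ
          have ht0 : (0:ℝ) < t := hpos t ht
          have hu0 : (0:ℝ) < u := lt_of_lt_of_le ht0 hu
          have hTu : T u t (P t x') = T u τ (P τ x) := by
            rw [hPx', hx', hTco τ t u hτ hle hu]
          have hrpow : (u / t) ^ lam = (u / τ) ^ lam * (t / τ) ^ (-lam) := by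
            have e : u / t = (u / τ) / (t / τ) := by
              field_simp
            rw [e, Real.div_rpow (by positivity) (by positivity), Real.rpow_neg (by positivity),
              div_eq_mul_inv]
          rw [hTu, hrpow]
          have hmem : ‖T u τ (P τ x)‖ * (u / τ) ^ lam ∈ A τ x := ⟨u, hle.trans hu, rfl⟩
          calc ‖T u τ (P τ x)‖ * ((u / τ) ^ lam * (t / τ) ^ (-lam))
              = (‖T u τ (P τ x)‖ * (u / τ) ^ lam) * (t / τ) ^ (-lam) := by ring
            _ ≤ sSup (A τ x) * (t / τ) ^ (-lam) :=
                mul_le_mul_of_nonneg_right (le_csSup (hAbdd τ hτ x) hmem)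
                  (Real.rpow_pos_of_pos (by positivity) _).le
            _ = (t / τ) ^ (-lam) * sSup (A τ x) := by ring
        have hc : (0:ℝ) ≤ (t / τ) ^ (-lam) :=
          (Real.rpow_pos_of_pos (div_pos (hpos t ht) (hpos τ hτ)) _).le
        show Nlyap T P lam t x' ≤ 1 * (t / τ) ^ (-lam) * Nlyap T P lam τ x
        simp only [Nlyap, if_pos ht, if_pos hτ]
        rw [← hA, ← hB, hB0, add_zero, one_mul]
        calc sSup (A t x') ≤ (t / τ) ^ (-lam) * sSup (A τ x) := hA1
          _ ≤ (t / τ) ^ (-lam) * (sSup (A τ x) + sSup (B τ x)) := by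
              have := hBnn τ hτ x
              nlinarith
      · -- unstable bound
        intro τ t hτ hle v hv
        have ht : (1:ℝ) ≤ t := hτ.trans hle
        have hτ0 : (0:ℝ) < τ := hpos τ hτ
        have ht0 : (0:ℝ) < t := hpos t ht
        have hA0 : sSup (A τ v) = 0 := by
          apply le_antisymm _ (hAnn τ hτ v)
          refine csSup_le (hAne τ hτ v) fun r hr => ?_
          obtain ⟨u, hu, rfl⟩ := hr
          rw [hv, map_zero]
          simp
        have hPTv : P t (T t τ v) = 0 := by
          rw [hcomm' τ t hτ hle, hv, map_zero]
        have hkey : (t / τ) ^ lam * sSup (B τ v) ≤ sSup (B t (T t τ v)) := by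
          refine mul_sSup_le_sSup' (Real.rpow_pos_of_pos (by positivity) _).le
            (hBne τ hτ v) (hBbdd t ht _) ?_
          rintro r ⟨s, hs1, hs2, w, hw, hTw, rfl⟩
          have hs0 : (0:ℝ) < s := lt_of_lt_of_le one_pos hs1
          have hTv : T t s w = T t τ v - P t (T t τ v) := by
            rw [hPTv, sub_zero, ← hTco s τ t hs1 hs2 hle, hTw, hv, sub_zero]
          refine ⟨s, hs1, hs2.trans hle, w, hw, hTv, ?_⟩
          have : (τ / s) ^ lam * (t / τ) ^ lam = (t / s) ^ lam := by
            rw [← Real.mul_rpow (by positivity) (by positivity)]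
            congr 1
            field_simp
          calc (t / τ) ^ lam * (‖w‖ * (τ / s) ^ lam)
              = ‖w‖ * ((τ / s) ^ lam * (t / τ) ^ lam) := by ring
            _ = ‖w‖ * (t / s) ^ lam := by rw [this]
        show (1:ℝ)⁻¹ * (t / τ) ^ lam * Nlyap T P lam τ v ≤ Nlyap T P lam t (T t τ v)
        simp only [Nlyap, if_pos hτ, if_pos ht]
        rw [← hA, ← hB, hA0, zero_add, inv_one, one_mul]
        calc (t / τ) ^ lam * sSup (B τ v) ≤ sSup (B t (T t τ v)) := hkey
          _ ≤ sSup (A t (T t τ v)) + sSup (B t (T t τ v)) := by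
              have := hAnn t ht (T t τ v)
              linarith
  · rintro ⟨N, C, ε, hC, hε, ⟨hNadd, hNsmul, hNeq⟩,
      P, D, lam, hD, hlam, hPP, hcomm, hbij, hstab, hunst⟩
    refine ⟨P, C * D, lam, ε, mul_pos hC hD, hlam, hε, hPP, hcomm, hbij, ?_, ?_⟩
    · intro τ t hτ hle x
      have ht1 : (1:ℝ) ≤ t := hτ.trans hle
      have h1 : ‖T t τ (P τ x)‖ ≤ N t (T t τ (P τ x)) := (hNeq t _ ht1).1
      have h2 := hstab τ t hτ hle x
      have h3 : N τ x ≤ C * τ ^ ε * ‖x‖ := (hNeq τ x hτ).2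
      have hpow : (0:ℝ) ≤ (t / τ) ^ (-lam) :=
        (Real.rpow_pos_of_pos (div_pos (lt_of_lt_of_le one_pos ht1)
          (lt_of_lt_of_le one_pos hτ)) _).le
      calc ‖T t τ (P τ x)‖ ≤ D * (t / τ) ^ (-lam) * N τ x := h1.trans h2
        _ ≤ D * (t / τ) ^ (-lam) * (C * τ ^ ε * ‖x‖) :=
            mul_le_mul_of_nonneg_left h3 (by positivity)
        _ = C * D * (t / τ) ^ (-lam) * τ ^ ε * ‖x‖ := by ring
    · intro τ t hτ hle v hv
      have ht1 : (1:ℝ) ≤ t := hτ.trans hle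
      have ht0 : (0:ℝ) < t := lt_of_lt_of_le one_pos ht1
      have hτ0 : (0:ℝ) < τ := lt_of_lt_of_le one_pos hτ
      have hpow : (0:ℝ) < (t / τ) ^ lam := Real.rpow_pos_of_pos (div_pos ht0 hτ0) _
      have hb : (0:ℝ) < t ^ ε := Real.rpow_pos_of_pos ht0 _
      have h1 := hunst τ t hτ hle v hv
      have h2 : N t (T t τ v) ≤ C * t ^ ε * ‖T t τ v‖ := (hNeq t _ ht1).2
      have h3 : ‖v‖ ≤ N τ v := (hNeq τ v hτ).1
      have key : D⁻¹ * (t / τ) ^ lam * ‖v‖ ≤ C * t ^ ε * ‖T t τ v‖ :=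
        (mul_le_mul_of_nonneg_left h3 (by positivity)).trans (h1.trans h2)
      have hneg : t ^ (-ε) = (t ^ ε)⁻¹ := Real.rpow_neg ht0.le ε
      rw [hneg]
      have heq : (C * D)⁻¹ * (t / τ) ^ lam * (t ^ ε)⁻¹ * ‖v‖
          = (C * t ^ ε)⁻¹ * (D⁻¹ * (t / τ) ^ lam * ‖v‖) := by
        rw [mul_inv, mul_inv]; ring
      rw [heq]
      calc (C * t ^ ε)⁻¹ * (D⁻¹ * (t / τ) ^ lam * ‖v‖)
          ≤ (C * t ^ ε)⁻¹ * (C * t ^ ε * ‖T t τ v‖) :=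
            mul_le_mul_of_nonneg_left key (by positivity)
        _ = ‖T t τ v‖ := by field_simp
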